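/- Let V be a Euclidean Jordan algebra with cone of squares Q, and L a Jordan subalgebra of V with cone of squares Q_0 = {x² : x ∈ L}. Then for every x in L, P_Q(x) = P_{Q_0}(x) ∈ L; consequently P_Q(L) ⊆ L, i.e., L is a lattice-like subspace of (V, Q). -/
import Mathlib


open scoped RealInnerProductSpace

/-- A Euclidean Jordan algebra structure on a real inner product space `V`:
a commutative bilinear product satisfying the Jordan identity, for which the
inner product is associative, together with a unit element. -/
structure EJA (V : Type*) [NormedAddCommGroup V] [InnerProductSpace ℝ V] where
  mul : V →ₗ[ℝ] V →ₗ[ℝ] V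
  comm : ∀ x y : V, mul x y = mul y x
  jordan : ∀ x y : V, mul x (mul (mul x x) y) = mul (mul x x) (mul x y)
  assoc_inner : ∀ x y z : V, ⟪mul x y, z⟫ = ⟪y, mul x z⟫
  one : V
  one_mul : ∀ x : V, mul one x = x

variable {V : Type*} [NormedAddCommGroup V] [InnerProductSpace ℝ V]

/-- The cone of squares of a Euclidean Jordan algebra. -/
def EJA.coneOfSquares (J : EJA V) : Set V := {x | ∃ y, x = J.mul y y}

/-- An idempotent element. -/
def EJA.IsIdem (J : EJA V) (c : V) : Prop := J.mul c c = c

/-- A primitive idempotent: a nonzero idempotent which is not the sum of two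
nonzero orthogonal idempotents. -/
def EJA.IsPrimitiveIdem (J : EJA V) (c : V) : Prop :=
  J.IsIdem c ∧ c ≠ 0 ∧
    ∀ u v : V, J.IsIdem u → J.IsIdem v → J.mul u v = 0 → c = u + v → u = 0 ∨ v = 0

/-- A Jordan frame: a complete system of mutually orthogonal primitive
idempotents summing to the unit. -/
def EJA.IsJordanFrame (J : EJA V) {r : ℕ} (c : Fin r → V) : Prop :=
  (∀ i, J.IsPrimitiveIdem (c i)) ∧
    (∀ i j, i ≠ j → J.mul (c i) (c j) = 0) ∧ (∑ i, c i) = J.one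

/-- An ideal of a Euclidean Jordan algebra. -/
def EJA.IsIdeal (J : EJA V) (I : Submodule ℝ V) : Prop :=
  ∀ x ∈ I, ∀ y : V, J.mul x y ∈ I

/-- A simple Euclidean Jordan algebra: nontrivial and with no nontrivial ideal. -/
def EJA.IsSimple (J : EJA V) : Prop :=
  (⊤ : Submodule ℝ V) ≠ ⊥ ∧ ∀ I : Submodule ℝ V, J.IsIdeal I → I = ⊥ ∨ I = ⊤

/-- `p` is the metric projection (nearest point) of `x` onto the set `D`. -/
def IsProjection {E : Type*} [NormedAddCommGroup E] (D : Set E) (x p : E) : Prop :=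
  p ∈ D ∧ ∀ z ∈ D, dist x p ≤ dist x z

lemma EJA.lin1 (J : EJA V) (x z y : V) :
    J.mul z (J.mul (J.mul x x) y) + (2:ℝ) • J.mul x (J.mul (J.mul x z) y)
      = (2:ℝ) • J.mul (J.mul x z) (J.mul x y) + J.mul (J.mul x x) (J.mul z y) := by
  have h1 := J.jordan (x + z) y
  have h2 := J.jordan (x - z) y
  have h3 := J.jordan z y
  simp only [map_add, map_sub, LinearMap.add_apply, LinearMap.sub_apply] at h1 h2
  rw [J.comm z x] at h1 h2
  linear_combination (norm := module) ((2:ℝ)⁻¹) • h1 - ((2:ℝ)⁻¹) • h2 - h3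

lemma EJA.lin2 (J : EJA V) (x w z y : V) :
    J.mul z (J.mul (J.mul x w) y) + J.mul x (J.mul (J.mul w z) y)
        + J.mul w (J.mul (J.mul x z) y)
      = J.mul (J.mul w z) (J.mul x y) + J.mul (J.mul x z) (J.mul w y)
        + J.mul (J.mul x w) (J.mul z y) := by
  have h1 := J.lin1 (x + w) z y
  have h2 := J.lin1 x z y
  have h3 := J.lin1 w z y
  simp only [map_add, LinearMap.add_apply] at h1
  rw [J.comm w x] at h1
  linear_combination (norm := module) ((2:ℝ)⁻¹) • h1 - ((2:ℝ)⁻¹) • h2 - ((2:ℝ)⁻¹) • h3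

/-- `pw a n` is `a^(n+1)`. -/
def EJA.pw (J : EJA V) (a : V) : ℕ → V
  | 0 => a
  | n + 1 => J.mul a (J.pw a n)

lemma EJA.pw_succ (J : EJA V) (a : V) (n : ℕ) : J.pw a (n+1) = J.mul a (J.pw a n) := rfl

/-- Commutator of multiplication operators of powers. -/
def EJA.Cv (J : EJA V) (a : V) (i j : ℕ) (y : V) : V :=
  J.mul (J.pw a i) (J.mul (J.pw a j) y) - J.mul (J.pw a j) (J.mul (J.pw a i) y)

lemma EJA.Cv_antisymm (J : EJA V) (a : V) (i j : ℕ) (y : V) :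
    J.Cv a i j y = - J.Cv a j i y := by
  simp only [EJA.Cv]; abel

lemma EJA.pow_main (J : EJA V) (a : V) : ∀ N : ℕ,
    (∀ m n, m + n + 2 ≤ N → J.mul (J.pw a m) (J.pw a n) = J.pw a (m+n+1)) ∧
    (∀ m n, m + n + 2 ≤ N → ∀ y, J.Cv a m n y = 0) := by
  intro N
  induction N with
  | zero => exact ⟨fun m n h => by omega, fun m n h => by omega⟩
  | succ N ih =>
    obtain ⟨ihP, ihK⟩ := ih
    have hP : ∀ m n, m + n + 2 ≤ N + 1 → J.mul (J.pw a m) (J.pw a n) = J.pw a (m+n+1) := by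
      intro m n hmn
      match n with
      | 0 => rw [J.comm]; rfl
      | k+1 =>
        have hcomm := ihK m 0 (by omega) (J.pw a k)
        rw [EJA.Cv, sub_eq_zero] at hcomm
        rw [EJA.pw_succ]
        show J.mul (J.pw a m) (J.mul (J.pw a 0) (J.pw a k)) = _
        rw [hcomm, ihP m k (by omega)]
        show J.mul a (J.pw a (m+k+1)) = _
        rw [show m + (k+1) + 1 = (m+k+1) + 1 by omega]
        rfl
    refine ⟨hP, fun m n hmn y => ?_⟩
    rcases Nat.lt_or_ge (m + n + 2) (N + 1) with hlt | hge
    · exact ihK m n (by omega) y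
    · have hs : m + n + 2 = N + 1 := by omega
      set s := m + n with hsdef
      -- step relation
      have hrel : ∀ k j, k + j + 1 = s → ∀ y : V,
          J.Cv a (k+1) j y = J.Cv a k (j+1) y + J.Cv a 0 s y := by
        intro k j hkj y
        have h := J.lin2 (J.pw a k) (J.pw a j) (J.pw a 0) y
        have hxw : J.mul (J.pw a k) (J.pw a j) = J.pw a s := by
          rw [ihP k j (by omega), show k + j + 1 = s by omega]
        have hwz : J.mul (J.pw a j) (J.pw a 0) = J.pw a (j+1) := by
          rw [J.comm]; rfl
        have hxz : J.mul (J.pw a k) (J.pw a 0) = J.pw a (k+1) := by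
          rw [J.comm]; rfl
        rw [hxw, hwz, hxz] at h
        simp only [EJA.Cv]
        linear_combination (norm := module) -h
      -- linear growth
      have hCC : ∀ k j, k + j = s → ∀ y : V,
          J.Cv a k j y = ((k:ℝ) + 1) • J.Cv a 0 s y := by
        intro k
        induction k with
        | zero => intro j hj y; rw [show j = s by omega]; norm_num
        | succ k ihk =>
          intro j hj y
          rw [hrel k j (by omega) y, ihk (j+1) (by omega) y]
          push_cast
          module
      have hzero : J.Cv a 0 s y = 0 := by
        have h1 := hCC s 0 (by omega) y
        rw [J.Cv_antisymm a s 0 y] at h1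
        have h2 : ((s:ℝ) + 2) • J.Cv a 0 s y = 0 := by
          linear_combination (norm := module) -h1
        rcases smul_eq_zero.mp h2 with h | h
        · exact absurd h (by positivity)
        · exact h
      rw [hCC m n (by omega) y, hzero, smul_zero]

lemma EJA.pow_assoc (J : EJA V) (a : V) (m n : ℕ) :
    J.mul (J.pw a m) (J.pw a n) = J.pw a (m+n+1) :=
  (J.pow_main a (m+n+2)).1 m n le_rfl

lemma EJA.sq_eq_zero (J : EJA V) {b : V} (h : J.mul b b = 0) : b = 0 := by
  have h1 := J.assoc_inner b b J.one
  rw [h, J.comm b J.one, J.one_mul] at h1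
  simpa using h1.symm

lemma EJA.idem_inner_nonneg (J : EJA V) {c : V} (hc : J.mul c c = c) (u : V) :
    0 ≤ ⟪J.mul c u, u⟫ := by
  have key : ∀ v w : V, ⟪J.mul c v, w⟫ = ⟪v, J.mul c w⟫ := fun v w => J.assoc_inner c v w
  have cubic : ∀ v : V, J.mul c v + (2:ℝ) • J.mul c (J.mul c (J.mul c v))
      = (3:ℝ) • J.mul c (J.mul c v) := by
    intro v
    have h := J.lin1 c v c
    simp only [hc] at h
    rw [J.comm v c, J.comm (J.mul c v) c] at h
    linear_combination (norm := module) h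
  set b : V := J.mul c (J.mul c u) - J.mul c u with hbdef
  have hbev : J.mul c (J.mul c b) - J.mul c b = (-(4:ℝ)⁻¹) • b := by
    rw [hbdef]
    simp only [map_sub]
    linear_combination (norm := module) (-(4:ℝ)⁻¹) • cubic u + ((2:ℝ)⁻¹) • cubic (J.mul c u)
  have sq : ∀ w : V, ⟪b, w⟫ = ⟪u, J.mul c (J.mul c w)⟫ - ⟪u, J.mul c w⟫ := by
    intro w
    rw [hbdef, inner_sub_left, key (J.mul c u) w, key u (J.mul c w), key u w]
  have hbb : ⟪b, b⟫ = -(4:ℝ)⁻¹ * ⟪b, u⟫ := by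
    rw [sq b, ← inner_sub_right, hbev, real_inner_smul_right, real_inner_comm]
  have h3 : ⟪b, u⟫ = ⟪J.mul c u, J.mul c u⟫ - ⟪J.mul c u, u⟫ := by
    rw [sq u, ← key u (J.mul c u), real_inner_comm u (J.mul c u)]
  have h1 : (0:ℝ) ≤ ⟪J.mul c u, J.mul c u⟫ := real_inner_self_nonneg
  have h2 : (0:ℝ) ≤ ⟪b, b⟫ := real_inner_self_nonneg
  linarith

/-- The subalgebra generated by `a`. -/
def EJA.gen (J : EJA V) (a : V) : Submodule ℝ V :=
  Submodule.span ℝ (Set.range (J.pw a))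

lemma EJA.self_mem_gen (J : EJA V) (a : V) : a ∈ J.gen a :=
  Submodule.subset_span ⟨0, rfl⟩

lemma EJA.gen_mul_mem (J : EJA V) (a : V) {b c : V} (hb : b ∈ J.gen a) (hc : c ∈ J.gen a) :
    J.mul b c ∈ J.gen a := by
  induction hb using Submodule.span_induction generalizing c with
  | mem b hb =>
    induction hc using Submodule.span_induction with
    | mem c hc =>
      obtain ⟨i, rfl⟩ := hb
      obtain ⟨j, rfl⟩ := hc
      rw [J.pow_assoc a i j]
      exact Submodule.subset_span ⟨i + j + 1, rfl⟩
    | zero => simp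
    | add c d hc hd ihc ihd => rw [map_add]; exact add_mem ihc ihd
    | smul r c hc ihc => rw [map_smul]; exact Submodule.smul_mem _ r ihc
  | zero => simp
  | add b d hb hd ihb ihd => rw [map_add, LinearMap.add_apply]; exact add_mem (ihb hc) (ihd hc)
  | smul r b hb ihb => rw [map_smul, LinearMap.smul_apply]; exact Submodule.smul_mem _ r (ihb hc)

lemma EJA.gen_assoc (J : EJA V) (a : V) {b c : V} (hb : b ∈ J.gen a) (hc : c ∈ J.gen a) :
    J.mul a (J.mul b c) = J.mul (J.mul a b) c := by
  induction hb using Submodule.span_induction generalizing c with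
  | mem b hb =>
    induction hc using Submodule.span_induction with
    | mem c hc =>
      obtain ⟨i, rfl⟩ := hb
      obtain ⟨j, rfl⟩ := hc
      rw [J.pow_assoc a i j]
      have h1 : J.mul a (J.pw a (i + j + 1)) = J.pw a (i + j + 2) := rfl
      have h2 : J.mul a (J.pw a i) = J.pw a (i + 1) := rfl
      rw [h1, h2, J.pow_assoc a (i+1) j, show i + 1 + j + 1 = i + j + 2 by omega]
    | zero => simp
    | add c d hc hd ihc ihd => simp only [map_add]; rw [ihc, ihd]
    | smul r c hc ihc => simp only [map_smul]; rw [ihc]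
  | zero => simp
  | add b d hb hd ihb ihd =>
    simp only [map_add, LinearMap.add_apply]; rw [ihb hc, ihd hc]
  | smul r b hb ihb =>
    simp only [map_smul, LinearMap.smul_apply]; rw [ihb hc]

lemma EJA.spectral (J : EJA V) [FiniteDimensional ℝ V] (a : V) :
    ∃ (S : Finset ℝ) (e : ℝ → V),
      (∀ μ, e μ ∈ J.gen a) ∧
      (∀ μ, J.mul a (e μ) = μ • e μ) ∧
      a = ∑ μ ∈ S, e μ ∧
      (∀ μ ν, μ ≠ ν → J.mul (e μ) (e ν) = 0) ∧
      (∀ μ ∈ S, J.mul (e μ) (e μ) = μ • e μ) ∧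
      (∀ μ ν, μ ≠ ν → ⟪e μ, e ν⟫ = 0) := by
  classical
  set A := J.gen a with hA
  have hinv : ∀ v ∈ A, J.mul a v ∈ A := fun v hv => J.gen_mul_mem a (J.self_mem_gen a) hv
  set T : A →ₗ[ℝ] A := (J.mul a).restrict hinv with hT
  have hTsymm : T.IsSymmetric := by
    intro v w
    have : ⟪J.mul a (v:V), (w:V)⟫ = ⟪(v:V), J.mul a (w:V)⟫ := J.assoc_inner a v w
    simpa [hT, Submodule.coe_inner, LinearMap.restrict_coe_apply] using this
  have htop : (⨆ μ, Module.End.eigenspace T μ) = ⊤ :=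
    Submodule.orthogonal_eq_bot_iff.mp hTsymm.orthogonalComplement_iSup_eigenspaces_eq_bot
  have hmem : (⟨a, J.self_mem_gen a⟩ : A) ∈ ⨆ μ, Module.End.eigenspace T μ := by
    rw [htop]; trivial
  rw [Submodule.mem_iSup_iff_exists_finsupp] at hmem
  obtain ⟨f, hf, hsum⟩ := hmem
  set e : ℝ → V := fun μ => ((f μ : A) : V) with he_def
  have he : ∀ μ, J.mul a (e μ) = μ • e μ := by
    intro μ
    have h := Module.End.mem_eigenspace_iff.mp (hf μ)
    have := congrArg (Subtype.val) h
    simpa [hT, he_def, LinearMap.restrict_coe_apply] using this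
  have hsum' : a = ∑ μ ∈ f.support, e μ := by
    have := congrArg (Subtype.val) hsum
    rw [Finsupp.sum] at this
    simpa [he_def] using this.symm
  have hcross : ∀ μ ν, μ ≠ ν → J.mul (e μ) (e ν) = 0 := by
    intro μ ν hμν
    have h1 : J.mul a (J.mul (e μ) (e ν)) = μ • J.mul (e μ) (e ν) := by
      rw [J.gen_assoc a (Submodule.coe_mem _) (Submodule.coe_mem _), he μ,
        map_smul, LinearMap.smul_apply]
    have h2 : J.mul a (J.mul (e μ) (e ν)) = ν • J.mul (e μ) (e ν) := by
      rw [J.comm (e μ) (e ν),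
        J.gen_assoc a (Submodule.coe_mem _) (Submodule.coe_mem _), he ν,
        map_smul, LinearMap.smul_apply, J.comm (e ν) (e μ)]
    have h3 : (μ - ν) • J.mul (e μ) (e ν) = 0 := by
      rw [sub_smul, ← h1, ← h2, sub_self]
    rcases smul_eq_zero.mp h3 with h | h
    · exact absurd (sub_eq_zero.mp h) hμν
    · exact h
  refine ⟨f.support, e, fun μ => Submodule.coe_mem _, he, hsum', hcross, ?_, ?_⟩
  · -- diag
    intro μ hμ
    have hμsum : J.mul a (e μ) = ∑ ν ∈ f.support, J.mul (e ν) (e μ) := by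
      conv_lhs => rw [hsum']
      rw [map_sum, LinearMap.sum_apply]
    rw [Finset.sum_eq_single_of_mem μ hμ (fun ν _ hne => hcross ν μ hne)] at hμsum
    rw [← hμsum, he μ]
  · -- inner orthogonality
    intro μ ν hμν
    have h := J.assoc_inner a (e μ) (e ν)
    rw [he μ, he ν, real_inner_smul_left, real_inner_smul_right] at h
    have h2 : (μ - ν) * ⟪e μ, e ν⟫ = 0 := by linear_combination h
    exact (mul_eq_zero.mp h2).resolve_left (sub_ne_zero.mpr hμν)

/-- Self-duality half: squares have nonnegative inner products. -/
lemma EJA.sq_inner_nonneg (J : EJA V) [FiniteDimensional ℝ V] (w u : V) :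
    0 ≤ ⟪J.mul w w, J.mul u u⟫ := by
  obtain ⟨S, e, hegen, he, hsum, hcross, hdiag, horth⟩ := J.spectral w
  have hw2 : J.mul w w = ∑ μ ∈ S, μ • e μ := by
    calc J.mul w w = J.mul w (∑ μ ∈ S, e μ) := by rw [← hsum]
      _ = ∑ μ ∈ S, J.mul w (e μ) := map_sum (J.mul w) _ _
      _ = ∑ μ ∈ S, μ • e μ := Finset.sum_congr rfl (fun μ _ => he μ)
  rw [hw2, sum_inner]
  refine Finset.sum_nonneg (fun μ hμ => ?_)
  rw [real_inner_smul_left]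
  rcases eq_or_ne μ 0 with h0 | h0
  · simp [h0]
  · have hd : J.mul (μ⁻¹ • e μ) (μ⁻¹ • e μ) = μ⁻¹ • e μ := by
      have h1 : J.mul (μ⁻¹ • e μ) (μ⁻¹ • e μ) = (μ⁻¹ * μ⁻¹) • J.mul (e μ) (e μ) := by
        simp only [map_smul, LinearMap.smul_apply, smul_smul]
      rw [h1, hdiag μ hμ, smul_smul, show μ⁻¹ * μ⁻¹ * μ = μ⁻¹ by field_simp]
    have hinner : ⟪μ⁻¹ • e μ, J.mul u u⟫ = ⟪J.mul (μ⁻¹ • e μ) u, u⟫ := by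
      rw [real_inner_comm, J.assoc_inner u u (μ⁻¹ • e μ), J.comm u (μ⁻¹ • e μ),
        real_inner_comm]
    have hnn : 0 ≤ ⟪μ⁻¹ • e μ, J.mul u u⟫ := hinner ▸ J.idem_inner_nonneg hd u
    have heμ : e μ = μ • (μ⁻¹ • e μ) := by rw [smul_smul, mul_inv_cancel₀ h0, one_smul]
    rw [heμ, real_inner_smul_left]
    nlinarith [hnn, mul_self_nonneg μ]

/-- Decomposition into orthogonal positive and negative parts, inside `gen a`. -/
lemma EJA.posneg (J : EJA V) [FiniteDimensional ℝ V] (a : V) :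
    ∃ s u : V, s ∈ J.gen a ∧ u ∈ J.gen a ∧ a = J.mul s s - J.mul u u ∧
      ⟪J.mul s s, J.mul u u⟫ = 0 := by
  classical
  obtain ⟨S, e, hegen, he, hsum, hcross, hdiag, horth⟩ := J.spectral a
  set Spos := S.filter (fun μ => 0 < μ) with hSpos
  set Sneg := S.filter (fun μ => μ < 0) with hSneg
  have sqsum : ∀ (F : Finset ℝ), F ⊆ S → ∀ c : ℝ → ℝ,
      J.mul (∑ μ ∈ F, c μ • e μ) (∑ μ ∈ F, c μ • e μ)
        = ∑ μ ∈ F, (c μ * c μ * μ) • e μ := by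
    intro F hFS c
    have h1 : J.mul (∑ μ ∈ F, c μ • e μ) = ∑ μ ∈ F, c μ • J.mul (e μ) := by
      rw [map_sum]
      exact Finset.sum_congr rfl fun μ _ => map_smul J.mul (c μ) (e μ)
    rw [h1, LinearMap.sum_apply]
    refine Finset.sum_congr rfl fun μ hμ => ?_
    rw [LinearMap.smul_apply, map_sum, Finset.sum_eq_single_of_mem μ hμ (fun ν _ hνμ => by
      rw [map_smul, hcross μ ν (Ne.symm hνμ), smul_zero]),
      map_smul, hdiag μ (hFS hμ), smul_smul, smul_smul, mul_assoc]
  set s : V := ∑ μ ∈ Spos, (Real.sqrt μ)⁻¹ • e μ with hs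
  set u : V := ∑ μ ∈ Sneg, (Real.sqrt (-μ))⁻¹ • e μ with hu
  have hss : J.mul s s = ∑ μ ∈ Spos, e μ := by
    rw [hs, sqsum Spos (Finset.filter_subset _ _)]
    refine Finset.sum_congr rfl (fun μ hμ => ?_)
    have hμpos : 0 < μ := (Finset.mem_filter.mp hμ).2
    rw [← Real.sqrt_inv, Real.mul_self_sqrt (inv_nonneg.mpr hμpos.le)]
    rw [inv_mul_cancel₀ (ne_of_gt hμpos), one_smul]
  have huu : J.mul u u = - ∑ μ ∈ Sneg, e μ := by
    rw [hu, sqsum Sneg (Finset.filter_subset _ _), ← Finset.sum_neg_distrib]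
    refine Finset.sum_congr rfl (fun μ hμ => ?_)
    have hμneg : μ < 0 := (Finset.mem_filter.mp hμ).2
    rw [← Real.sqrt_inv, Real.mul_self_sqrt (inv_nonneg.mpr (by linarith : (0:ℝ) ≤ -μ))]
    rw [show (-μ)⁻¹ * μ = -1 by rw [← neg_inv, neg_mul, inv_mul_cancel₀ (ne_of_lt hμneg)], neg_one_smul]
  have hzero : ∀ μ ∈ S, ¬ 0 < μ → ¬ μ < 0 → e μ = 0 := by
    intro μ hμ h1 h2
    have : μ = 0 := le_antisymm (not_lt.mp h1) (not_lt.mp h2)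
    subst this
    exact J.sq_eq_zero (by rw [hdiag 0 hμ, zero_smul])
  have hsplit : a = ∑ μ ∈ Spos, e μ + ∑ μ ∈ Sneg, e μ := by
    rw [hsum, ← Finset.sum_filter_add_sum_filter_not S (fun μ => 0 < μ)]
    congr 1
    rw [← Finset.sum_filter_add_sum_filter_not (S.filter (fun μ => ¬ 0 < μ)) (fun μ => μ < 0),
      Finset.filter_filter, Finset.filter_filter]
    have h1 : S.filter (fun μ => ¬ 0 < μ ∧ μ < 0) = Sneg := by
      rw [hSneg]
      exact Finset.filter_congr (fun μ _ => by constructor <;> intro h <;>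
        [exact h.2; exact ⟨not_lt.mpr (le_of_lt h), h⟩])
    have h2 : ∑ μ ∈ S.filter (fun μ => ¬ 0 < μ ∧ ¬ μ < 0), e μ = 0 :=
      Finset.sum_eq_zero (fun μ hμ => by
        have := Finset.mem_filter.mp hμ
        exact hzero μ this.1 this.2.1 this.2.2)
    rw [h1, h2, add_zero]
  refine ⟨s, u, Submodule.sum_mem _ (fun μ _ => Submodule.smul_mem _ _ (hegen μ)),
    Submodule.sum_mem _ (fun μ _ => Submodule.smul_mem _ _ (hegen μ)), ?_, ?_⟩
  · rw [hss, huu, hsplit]; abel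
  · rw [hss, huu, inner_neg_right, sum_inner]
    rw [Finset.sum_eq_zero (fun μ hμ => ?_), neg_zero]
    rw [inner_sum]
    refine Finset.sum_eq_zero (fun ν hν => ?_)
    have hμpos : 0 < μ := (Finset.mem_filter.mp hμ).2
    have hνneg : ν < 0 := (Finset.mem_filter.mp hν).2
    exact horth μ ν (by linarith)

lemma EJA.gen_le (J : EJA V) {L : Submodule ℝ V}
    (hL : ∀ x ∈ L, ∀ y ∈ L, J.mul x y ∈ L) {a : V} (ha : a ∈ L) : J.gen a ≤ L := by
  rw [EJA.gen, Submodule.span_le]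
  rintro _ ⟨n, rfl⟩
  induction n with
  | zero => exact ha
  | succ n ih => exact hL a ha (J.pw a n) ih


/-- Any Jordan subalgebra `L` of a Euclidean Jordan algebra `(V,Q)` is a
lattice-like subspace: for `x ∈ L`, the projection of `x` onto the cone of
squares `Q` of `V` coincides with the projection of `x` onto the cone of
squares `Q₀` of `L`, and lies in `L`; in particular `P_Q(L) ⊆ L`. -/
theorem jordan_subalgebra_latticeLike
    {V : Type*} [NormedAddCommGroup V] [InnerProductSpace ℝ V]
    [FiniteDimensional ℝ V] (J : EJA V)
    (L : Submodule ℝ V) (hL : ∀ x ∈ L, ∀ y ∈ L, J.mul x y ∈ L) :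
    ∀ x ∈ L, ∀ p q : V,
      IsProjection J.coneOfSquares x p →
      IsProjection {z | ∃ y ∈ L, z = J.mul y y} x q →
      p = q ∧ p ∈ L := by
  intro x hx p q hp hq
  obtain ⟨s, u, hsgen, hugen, hxeq, horth⟩ := J.posneg x
  have hsL : s ∈ L := J.gen_le hL hx hsgen
  set P := J.mul s s with hPdef
  set M := J.mul u u with hMdef
  have key : ∀ w : V, ‖x - P‖^2 + ‖P - J.mul w w‖^2 ≤ ‖x - J.mul w w‖^2 := by
    intro w
    have hxP : x - P = -M := by rw [hxeq]; abel
    have hz : x - J.mul w w = (P - J.mul w w) - M := by rw [hxeq]; abel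
    rw [hxP, hz, norm_neg, norm_sub_sq_real (P - J.mul w w) M]
    have h1 : ⟪P - J.mul w w, M⟫ = ⟪P, M⟫ - ⟪J.mul w w, M⟫ := inner_sub_left _ _ _
    rw [h1, horth]
    have h2 : (0:ℝ) ≤ ⟪J.mul w w, M⟫ := J.sq_inner_nonneg w u
    linarith
  have hPeq : ∀ z : V, (∃ w : V, z = J.mul w w) → dist x z ≤ dist x P → P = z := by
    rintro z ⟨w, rfl⟩ hdist
    have hkey := key w
    rw [dist_eq_norm, dist_eq_norm] at hdist
    have h3 : ‖x - J.mul w w‖^2 ≤ ‖x - P‖^2 := by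
      nlinarith [norm_nonneg (x - P), norm_nonneg (x - J.mul w w)]
    have h4 : ‖P - J.mul w w‖ = 0 := by
      have := norm_nonneg (P - J.mul w w)
      nlinarith
    exact sub_eq_zero.mp (norm_eq_zero.mp h4)
  have hpP : P = p := by
    obtain ⟨w, hw⟩ := hp.1
    exact hPeq p ⟨w, hw⟩ (hp.2 P ⟨s, rfl⟩)
  have hqP : P = q := by
    obtain ⟨y, hyL, hy⟩ := hq.1
    exact hPeq q ⟨y, hy⟩ (hq.2 P ⟨s, hsL, rfl⟩)
  exact ⟨hpP ▸ hqP ▸ rfl, hpP ▸ hL s hsL s hsL⟩
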